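/- Every even permutation in S_n is a commutator of two elements of S_n, i.e., for every σ ∈ A_n there exist τ₁, τ₂ ∈ S_n with σ = τ₁τ₂τ₁⁻¹τ₂⁻¹. -/
import Mathlib

open Equiv Equiv.Perm Finset
set_option linter.unusedSectionVars false

section model
variable {k : ℕ} [NeZero k]

lemma model_one_ne_zero (hk2 : 2 ≤ k) : (1 : ZMod k) ≠ 0 := by
  haveI : Fact (1 < k) := ⟨hk2⟩
  exact one_ne_zero

lemma model_rot_support (hk2 : 2 ≤ k) :
    (Equiv.addLeft (1 : ZMod k) : Perm (ZMod k)).support = univ := by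
  ext x
  simp only [Equiv.Perm.mem_support, Finset.mem_univ, iff_true]
  intro h
  have h' : (1 : ZMod k) + x = x := by simpa using h
  exact model_one_ne_zero hk2 (add_eq_right.mp h')

lemma model_rot_pow (m : ℕ) :
    (Equiv.addLeft (1 : ZMod k) : Perm (ZMod k)) ^ m = Equiv.addLeft (m : ZMod k) := by
  induction m with
  | zero => ext x; simp
  | succ m ih =>
    rw [pow_succ, ih]
    ext x
    simp only [Equiv.Perm.mul_apply, Equiv.coe_addLeft, Nat.cast_succ]
    ring

lemma model_rot_isCycle (hk2 : 2 ≤ k) :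
    IsCycle (Equiv.addLeft (1 : ZMod k) : Perm (ZMod k)) := by
  refine ⟨0, by simpa using model_one_ne_zero hk2, fun y _ => ⟨(y.val : ℤ), ?_⟩⟩
  rw [zpow_natCast, model_rot_pow]
  simpa using ZMod.natCast_rightInverse y

end model

section model2
variable {k : ℕ} [NeZero k]

lemma model_u_sq : (Equiv.neg (ZMod k) : Perm (ZMod k)) * Equiv.neg (ZMod k) = 1 := by
  ext x; simp [Equiv.Perm.mul_apply]

lemma model_v_sq (a : ZMod k) :
    (Equiv.subLeft a : Perm (ZMod k)) * Equiv.subLeft a = 1 := by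
  ext x; simp [Equiv.Perm.mul_apply]

lemma model_factA :
    (Equiv.subLeft (1 : ZMod k) : Perm (ZMod k)) * Equiv.neg (ZMod k) = Equiv.addLeft 1 := by
  ext x; simp [Equiv.Perm.mul_apply, sub_neg_eq_add]

lemma model_factB :
    (Equiv.subLeft (2 : ZMod k) : Perm (ZMod k)) * Equiv.subLeft (1 : ZMod k)
      = Equiv.addLeft 1 := by
  ext x
  simp only [Equiv.Perm.mul_apply, Equiv.subLeft_apply, Equiv.coe_addLeft]
  ring

lemma model_conj (m : ZMod k) :
    (Equiv.addLeft m : Perm (ZMod k)) * Equiv.neg (ZMod k) * (Equiv.addLeft m : Perm (ZMod k))⁻¹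
      = Equiv.subLeft (m + m) := by
  ext x
  have hinv : ((Equiv.addLeft m : Perm (ZMod k))⁻¹ : Perm (ZMod k)) x = -m + x := by
    rfl
  simp only [Equiv.Perm.mul_apply, hinv, Equiv.neg_apply, Equiv.coe_addLeft,
    Equiv.subLeft_apply]
  ring

lemma model_v_card_eq_u_card_odd (hk : Odd k) :
    (Equiv.Perm.support (Equiv.subLeft (1 : ZMod k) : Perm (ZMod k))).card
      = (Equiv.Perm.support (Equiv.neg (ZMod k) : Perm (ZMod k))).card := by
  obtain ⟨t, ht⟩ := hk
  have hm : ((t + 1 : ℕ) : ZMod k) + ((t + 1 : ℕ) : ZMod k) = 1 := by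
    have h1 : ((t + 1 + (t + 1) : ℕ) : ZMod k) = ((k + 1 : ℕ) : ZMod k) := by
      congr 1; omega
    push_cast at h1
    rw [ZMod.natCast_self] at h1
    push_cast at h1 ⊢
    linear_combination h1
  have h := model_conj (k := k) ((t + 1 : ℕ) : ZMod k)
  rw [hm] at h
  calc (Equiv.Perm.support (Equiv.subLeft (1 : ZMod k) : Perm (ZMod k))).card
      = (Equiv.Perm.support ((Equiv.addLeft (((t + 1 : ℕ) : ZMod k)) : Perm (ZMod k))
          * Equiv.neg (ZMod k)
          * (Equiv.addLeft (((t + 1 : ℕ) : ZMod k)) : Perm (ZMod k))⁻¹)).card := by rw [h]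
    _ = _ := Equiv.Perm.card_support_conj

lemma model_u_support_even (t : ℕ) (ht : k = t + t) (ht1 : 1 ≤ t) :
    Equiv.Perm.support (Equiv.neg (ZMod k) : Perm (ZMod k))
      = univ \ {0, ((t : ℕ) : ZMod k)} := by
  ext x
  simp only [Equiv.Perm.mem_support, Equiv.neg_apply, Finset.mem_sdiff, Finset.mem_univ,
    true_and, Finset.mem_insert, Finset.mem_singleton, not_or]
  constructor
  · intro h
    constructor
    · rintro rfl; simp at h
    · rintro rfl
      apply h
      have h2 : ((t : ℕ) : ZMod k) + ((t : ℕ) : ZMod k) = 0 := by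
        have h3 : ((t + t : ℕ) : ZMod k) = ((k : ℕ) : ZMod k) := by congr 1; omega
        push_cast at h3
        rw [ZMod.natCast_self] at h3
        linear_combination h3
      linear_combination -h2
  · rintro ⟨h0, htt⟩ h
    have hxx : x + x = 0 := by linear_combination -h
    have hv : ((2 * x.val : ℕ) : ZMod k) = 0 := by
      push_cast
      rw [ZMod.natCast_rightInverse x]
      linear_combination hxx
    have hdvd : k ∣ 2 * x.val := (ZMod.natCast_eq_zero_iff _ _).mp hv
    have hlt : x.val < k := ZMod.val_lt x
    obtain ⟨c, hc⟩ := hdvd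
    have hval : x.val = t * c := by
      have h2c : 2 * x.val = 2 * (t * c) := by rw [hc, ht]; ring
      omega
    have hc2 : c < 2 := by
      by_contra hcge
      push_neg at hcge
      have h2t : 2 * t ≤ t * c := by nlinarith
      omega
    have hx2 : x.val = 0 ∨ x.val = t := by interval_cases c <;> omega
    have hxeq : x = ((x.val : ℕ) : ZMod k) := (ZMod.natCast_rightInverse x).symm
    rcases hx2 with h' | h'
    · rw [h'] at hxeq
      exact h0 (by simpa using hxeq)
    · rw [h'] at hxeq
      exact htt hxeq

lemma model_u_card_even (t : ℕ) (ht : k = t + t) (ht1 : 1 ≤ t) :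
    (Equiv.Perm.support (Equiv.neg (ZMod k) : Perm (ZMod k))).card = k - 2 := by
  rw [model_u_support_even t ht ht1, Finset.card_sdiff_of_subset (Finset.subset_univ _), Finset.card_univ,
    ZMod.card]
  have h0t : (0 : ZMod k) ≠ ((t : ℕ) : ZMod k) := by
    have hlt : t < k := by omega
    intro h
    have hval := congrArg ZMod.val h
    rw [ZMod.val_zero, ZMod.val_natCast_of_lt hlt] at hval
    omega
  rw [Finset.card_insert_of_notMem (by simpa using h0t), Finset.card_singleton]

lemma model_v_card_even (hk : Even k) :
    (Equiv.Perm.support (Equiv.subLeft (1 : ZMod k) : Perm (ZMod k))).card = k := by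
  have hsupp : Equiv.Perm.support (Equiv.subLeft (1 : ZMod k) : Perm (ZMod k)) = univ := by
    ext x
    simp only [Equiv.Perm.mem_support, Equiv.subLeft_apply, Finset.mem_univ, iff_true]
    intro h
    have h1 : (1 : ZMod k) = x + x := by linear_combination h
    have h2 : (ZMod.castHom hk.two_dvd (ZMod 2)) (1 : ZMod k)
        = (ZMod.castHom hk.two_dvd (ZMod 2)) (x + x) := congrArg _ h1
    rw [map_one, map_add] at h2
    have hz : ∀ a : ZMod 2, a + a = 0 := by decide
    rw [hz] at h2
    exact one_ne_zero h2
  rw [hsupp, Finset.card_univ, ZMod.card]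

end model2

section main
variable {n : ℕ}

def Fact10 (σ : Perm (Fin n)) (d : ℤ) : Prop :=
  ∃ x y : Perm (Fin n), x * x = 1 ∧ y * y = 1 ∧ σ = x * y ∧
    x.support ⊆ σ.support ∧ y.support ⊆ σ.support ∧
    ((x.support.card : ℤ) = (y.support.card : ℤ) + d)

lemma Fact10.mul {σ τ : Perm (Fin n)} (h : σ.Disjoint τ) {d₁ d₂ : ℤ}
    (h₁ : Fact10 σ d₁) (h₂ : Fact10 τ d₂) : Fact10 (σ * τ) (d₁ + d₂) := by
  obtain ⟨x₁, y₁, hx₁, hy₁, he₁, hsx₁, hsy₁, hc₁⟩ := h₁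
  obtain ⟨x₂, y₂, hx₂, hy₂, he₂, hsx₂, hsy₂, hc₂⟩ := h₂
  have hss : _root_.Disjoint σ.support τ.support := h.disjoint_support
  have hd : ∀ a b : Perm (Fin n), a.support ⊆ σ.support → b.support ⊆ τ.support →
      a.Disjoint b := fun a b ha hb => disjoint_iff_disjoint_support.mpr (hss.mono ha hb)
  have dxx := hd _ _ hsx₁ hsx₂
  have dyx := hd _ _ hsy₁ hsx₂
  have dyy := hd _ _ hsy₁ hsy₂
  refine ⟨x₁ * x₂, y₁ * y₂, ?_, ?_, ?_, ?_, ?_, ?_⟩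
  · calc x₁ * x₂ * (x₁ * x₂) = x₁ * (x₂ * x₁) * x₂ := by group
      _ = x₁ * (x₁ * x₂) * x₂ := by rw [← dxx.commute.eq]
      _ = x₁ * x₁ * (x₂ * x₂) := by group
      _ = 1 := by rw [hx₁, hx₂, one_mul]
  · calc y₁ * y₂ * (y₁ * y₂) = y₁ * (y₂ * y₁) * y₂ := by group
      _ = y₁ * (y₁ * y₂) * y₂ := by rw [← dyy.commute.eq]
      _ = y₁ * y₁ * (y₂ * y₂) := by group
      _ = 1 := by rw [hy₁, hy₂, one_mul]
  · calc σ * τ = x₁ * y₁ * (x₂ * y₂) := by rw [he₁, he₂]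
      _ = x₁ * (y₁ * x₂) * y₂ := by group
      _ = x₁ * (x₂ * y₁) * y₂ := by rw [dyx.commute.eq]
      _ = x₁ * x₂ * (y₁ * y₂) := by group
  · refine (support_mul_le _ _).trans ?_
    rw [h.support_mul]
    exact Finset.union_subset_union hsx₁ hsx₂
  · refine (support_mul_le _ _).trans ?_
    rw [h.support_mul]
    exact Finset.union_subset_union hsy₁ hsy₂
  · rw [dxx.card_support_mul, dyy.card_support_mul]
    push_cast
    omega

lemma fact10_of_model {k : ℕ} [NeZero k] {c : Perm (Fin n)} (hc : c.IsCycle)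
    (hck : c.support.card = k) (x y : Perm (ZMod k))
    (hx : x * x = 1) (hy : y * y = 1) (hxy : x * y = Equiv.addLeft 1)
    (d : ℤ) (hd : ((Equiv.Perm.support x).card : ℤ) = ((Equiv.Perm.support y).card : ℤ) + d) :
    Fact10 c d := by
  have hk2 : 2 ≤ k := hck ▸ hc.two_le_card_support
  have hkn : k ≤ (univ : Finset (Fin n)).card := by
    rw [← hck]; exact Finset.card_le_univ _
  obtain ⟨S, -, hS⟩ := Finset.exists_subset_card_eq hkn
  let f : ZMod k ≃ {a : Fin n // a ∈ S} :=
    Fintype.equivOfCardEq (by rw [ZMod.card, Fintype.card_coe, hS])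
  set c' : Perm (Fin n) := (Equiv.addLeft (1 : ZMod k) : Perm (ZMod k)).extendDomain f
    with hc'def
  have hc'cycle : c'.IsCycle := (model_rot_isCycle hk2).extendDomain f
  have hc'card : c'.support.card = k := by
    rw [hc'def, card_support_extend_domain, model_rot_support hk2, Finset.card_univ, ZMod.card]
  have hconj : IsConj c' c := by
    rw [isConj_iff_cycleType_eq, hc'cycle.cycleType, hc.cycleType, hc'card, hck]
  obtain ⟨g, hg⟩ := isConj_iff.mp hconj
  have hsub : ∀ w : Perm (ZMod k), (g * w.extendDomain f * g⁻¹).support ⊆ c.support := by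
    intro w
    have h1 : (w.extendDomain f).support ⊆ c'.support := by
      rw [hc'def, support_extend_domain, support_extend_domain]
      exact Finset.map_subset_map.mpr (by rw [model_rot_support hk2]; exact Finset.subset_univ _)
    calc (g * w.extendDomain f * g⁻¹).support
        = (w.extendDomain f).support.map g.toEmbedding := support_conj
      _ ⊆ c'.support.map g.toEmbedding := Finset.map_subset_map.mpr h1
      _ = (g * c' * g⁻¹).support := support_conj.symm
      _ = c.support := by rw [hg]
  refine ⟨g * x.extendDomain f * g⁻¹, g * y.extendDomain f * g⁻¹, ?_, ?_, ?_, hsub x, hsub y, ?_⟩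
  · calc g * x.extendDomain f * g⁻¹ * (g * x.extendDomain f * g⁻¹)
        = g * (x.extendDomain f * x.extendDomain f) * g⁻¹ := by group
      _ = g * (x * x).extendDomain f * g⁻¹ := by rw [extendDomain_mul]
      _ = 1 := by rw [hx, extendDomain_one]; group
  · calc g * y.extendDomain f * g⁻¹ * (g * y.extendDomain f * g⁻¹)
        = g * (y.extendDomain f * y.extendDomain f) * g⁻¹ := by group
      _ = g * (y * y).extendDomain f * g⁻¹ := by rw [extendDomain_mul]
      _ = 1 := by rw [hy, extendDomain_one]; group
  · calc c = g * c' * g⁻¹ := hg.symm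
      _ = g * (x * y).extendDomain f * g⁻¹ := by rw [hc'def, hxy]
      _ = g * (x.extendDomain f * y.extendDomain f) * g⁻¹ := by rw [extendDomain_mul]
      _ = g * x.extendDomain f * g⁻¹ * (g * y.extendDomain f * g⁻¹) := by group
  · rw [card_support_conj, card_support_conj, card_support_extend_domain,
      card_support_extend_domain]
    exact hd

lemma fact10_cycle {c : Perm (Fin n)} (hc : c.IsCycle) :
    (Odd c.support.card → Fact10 c 0) ∧
      (Even c.support.card → Fact10 c 2 ∧ Fact10 c (-2)) := by
  have hk2 : 2 ≤ c.support.card := hc.two_le_card_support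
  haveI : NeZero c.support.card := ⟨by omega⟩
  constructor
  · intro hodd
    exact fact10_of_model hc rfl (Equiv.subLeft 1) (Equiv.neg _)
      (model_v_sq 1) model_u_sq model_factA 0
      (by rw [model_v_card_eq_u_card_odd hodd]; ring)
  · intro heven
    obtain ⟨t, ht⟩ := heven
    have ht1 : 1 ≤ t := by omega
    constructor
    · exact fact10_of_model hc rfl (Equiv.subLeft 1) (Equiv.neg _)
        (model_v_sq 1) model_u_sq model_factA 2
        (by rw [model_v_card_even ⟨t, ht⟩, model_u_card_even t ht ht1]; omega)
    · have hcard2 : (Equiv.Perm.support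
          (Equiv.subLeft (2 : ZMod c.support.card) : Perm (ZMod c.support.card))).card
          = c.support.card - 2 := by
        have h := model_conj (k := c.support.card) 1
        have h2 : (1 : ZMod c.support.card) + 1 = 2 := by norm_num
        rw [h2] at h
        rw [← h, card_support_conj, model_u_card_even t ht ht1]
      exact fact10_of_model hc rfl (Equiv.subLeft 2) (Equiv.subLeft 1)
        (model_v_sq 2) (model_v_sq 1) model_factB (-2)
        (by rw [hcard2, model_v_card_even ⟨t, ht⟩]; omega)

lemma invol_cycleType (x : Perm (Fin n)) (hx : x * x = 1) :
    x.cycleType = Multiset.replicate (x.support.card / 2) 2 := by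
  have horder : orderOf x ∣ 2 := orderOf_dvd_of_pow_eq_one (by rw [pow_two]; exact hx)
  have h2 : ∀ r ∈ x.cycleType, r = 2 := by
    intro r hr
    have hr2 : 2 ≤ r := two_le_of_mem_cycleType hr
    have hdvd : r ∣ 2 := (Multiset.dvd_lcm hr).trans (by rw [lcm_cycleType]; exact horder)
    have := Nat.le_of_dvd (by norm_num) hdvd
    omega
  have hrep : x.cycleType = Multiset.replicate x.cycleType.card 2 :=
    Multiset.eq_replicate.mpr ⟨rfl, h2⟩
  have hsum := sum_cycleType x
  rw [hrep, Multiset.sum_replicate, smul_eq_mul] at hsum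
  rw [hrep]
  congr 1
  omega

lemma fact10_even (σ : Perm (Fin n)) :
    (sign σ = 1 → Fact10 σ 0) ∧ (sign σ = -1 → Fact10 σ 2 ∧ Fact10 σ (-2)) := by
  refine cycle_induction_on
    (P := fun σ : Perm (Fin n) =>
      (sign σ = 1 → Fact10 σ 0) ∧ (sign σ = -1 → Fact10 σ 2 ∧ Fact10 σ (-2)))
    σ ?_ ?_ ?_
  · constructor
    · intro _
      exact ⟨1, 1, by simp, by simp, by simp, by simp, by simp, by simp⟩
    · intro h
      rw [Equiv.Perm.sign_one] at h
      exact absurd h (by decide)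
  · intro c hc
    have h := fact10_cycle hc
    rcases Nat.even_or_odd c.support.card with he | ho
    · refine ⟨fun h1 => absurd h1 ?_, fun _ => h.2 he⟩
      rw [hc.sign, he.neg_one_pow]
      decide
    · refine ⟨fun _ => h.1 ho, fun h2 => absurd h2 ?_⟩
      rw [hc.sign, ho.neg_one_pow]
      decide
  · intro σ τ hdisj _ ih1 ih2
    rcases Int.units_eq_one_or (sign σ) with hs | hs <;>
      rcases Int.units_eq_one_or (sign τ) with ht | ht
    · refine ⟨fun _ => ?_, fun h2 => ?_⟩
      · have H := Fact10.mul hdisj (ih1.1 hs) (ih2.1 ht)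
        simpa using H
      · rw [Equiv.Perm.sign_mul, hs, ht] at h2
        exact absurd h2 (by decide)
    · refine ⟨fun h1 => ?_, fun _ => ?_⟩
      · rw [Equiv.Perm.sign_mul, hs, ht] at h1
        exact absurd h1 (by decide)
      · exact ⟨by simpa using Fact10.mul hdisj (ih1.1 hs) ((ih2.2 ht).1),
          by simpa using Fact10.mul hdisj (ih1.1 hs) ((ih2.2 ht).2)⟩
    · refine ⟨fun h1 => ?_, fun _ => ?_⟩
      · rw [Equiv.Perm.sign_mul, hs, ht] at h1
        exact absurd h1 (by decide)
      · refine ⟨?_, ?_⟩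
        · have H := Fact10.mul hdisj ((ih1.2 hs).1) (ih2.1 ht)
          norm_num at H
          exact H
        · have H := Fact10.mul hdisj ((ih1.2 hs).2) (ih2.1 ht)
          norm_num at H
          exact H
    · refine ⟨fun _ => ?_, fun h2 => ?_⟩
      · have H := Fact10.mul hdisj ((ih1.2 hs).1) ((ih2.2 ht).2)
        norm_num at H
        exact H
      · rw [Equiv.Perm.sign_mul, hs, ht] at h2
        exact absurd h2 (by decide)

end main

theorem stmt_10 (n : ℕ) (σ : Equiv.Perm (Fin n))
    (hσ : Equiv.Perm.sign σ = 1) :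
    ∃ τ₁ τ₂ : Equiv.Perm (Fin n), σ = τ₁ * τ₂ * τ₁⁻¹ * τ₂⁻¹ := by
  obtain ⟨x, y, hx, hy, hxyσ, -, -, hcard⟩ := (fact10_even σ).1 hσ
  have hcards : x.support.card = y.support.card := by omega
  have htype : x.cycleType = y.cycleType := by
    rw [invol_cycleType x hx, invol_cycleType y hy, hcards]
  obtain ⟨g, hg⟩ := isConj_iff.mp (isConj_iff_cycleType_eq.mpr htype)
  refine ⟨x, g, ?_⟩
  have hxinv : x⁻¹ = x := inv_eq_of_mul_eq_one_right hx
  calc σ = x * y := hxyσ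
    _ = x * (g * x * g⁻¹) := by rw [hg]
    _ = x * g * x⁻¹ * g⁻¹ := by rw [hxinv]; group
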